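/- For every n, every p ∈ [0,1] and every map χ:[n]→[n] the following holds. If G_1, …, G_n are independent random graphs on a common vertex set of size n, each sampled from G(n,p), and G is a single random graph sampled from G(n,p), then the probability that (G_1,…,G_n) contains a χ-colored Hamilton cycle is at least the probability that G contains a Hamilton cycle. -/

import Mathlib

open MeasureTheory
open scoped ENNReal NNReal

noncomputable def bernoulliMeasure (p : ℝ) : Measure Bool :=
  (PMF.bernoulli (min (Real.toNNReal p) 1) (min_le_right _ _)).toMeasure

noncomputable def erMeasure (n : ℕ) (p : ℝ) : Measure (Sym2 (Fin n) → Bool) :=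
  Measure.pi fun _ => bernoulliMeasure p

noncomputable def erTupleMeasure (ι : Type*) [Fintype ι] (n : ℕ) (p : ℝ) :
    Measure (ι → Sym2 (Fin n) → Bool) :=
  Measure.pi fun _ => erMeasure n p

def graphOf {n : ℕ} (f : Sym2 (Fin n) → Bool) : SimpleGraph (Fin n) :=
  SimpleGraph.fromEdgeSet {e | f e = true}

def HasChiHamCycle (n : ℕ) (G : Fin n → SimpleGraph (Fin n)) (χ : Fin n → Fin n) : Prop :=
  3 ≤ n ∧ ∃ v : Fin n ≃ Fin n, ∀ i : Fin n, (G (χ i)).Adj (v i) (v (finRotate n i))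

def HasHamCycle (n : ℕ) (G : SimpleGraph (Fin n)) : Prop :=
  ∃ (a : Fin n) (p : G.Walk a a), p.IsHamiltonianCycle

namespace HamCoupling

/-! ### Elementary weighted counting on `κ → Bool` -/

variable {κ : Type*} [Fintype κ] [DecidableEq κ]

noncomputable def w (q : ℝ≥0∞) (b : Bool) : ℝ≥0∞ := if b then q else 1 - q

noncomputable def wt (q : ℝ≥0∞) (F : κ → Bool) : ℝ≥0∞ := ∏ x, w q (F x)

noncomputable def PR (q : ℝ≥0∞) (E : Set (κ → Bool)) : ℝ≥0∞ :=
  ∑ F : κ → Bool, E.indicator (wt q) F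

lemma sum_w {q : ℝ≥0∞} (hq : q ≤ 1) : ∑ b : Bool, w q b = 1 := by
  rw [Fintype.sum_bool]
  simp only [w, if_pos, if_neg, Bool.false_eq_true, ite_true, ite_false]
  rw [add_comm, tsub_add_cancel_of_le hq]

lemma wt_sum (q : ℝ≥0∞) (hq : q ≤ 1) : ∑ F : κ → Bool, wt q F = 1 := by
  calc ∑ F : κ → Bool, wt q F = ∏ _x : κ, ∑ b : Bool, w q b :=
        (Fintype.prod_sum (fun (_ : κ) (b : Bool) => w q b)).symm
    _ = 1 := by
        rw [Finset.prod_congr rfl fun x _ => sum_w hq, Finset.prod_const_one]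

lemma wt_comp_equiv (q : ℝ≥0∞) (σ : κ ≃ κ) (F : κ → Bool) : wt q (F ∘ σ) = wt q F := by
  unfold wt
  exact Equiv.prod_comp σ (fun z => w q (F z))

lemma PR_mono {q : ℝ≥0∞} {E E' : Set (κ → Bool)} (h : E ⊆ E') : PR q E ≤ PR q E' := by
  refine Finset.sum_le_sum fun F _ => ?_
  exact Set.indicator_le_indicator_of_subset h (fun _ => zero_le) F

lemma PR_le_of_inj {q : ℝ≥0∞} (E₀ E₁ : Set (κ → Bool)) (ψ : (κ → Bool) → (κ → Bool))
    (hinj : Function.Injective ψ) (hwt : ∀ F, wt q (ψ F) = wt q F)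
    (hmap : ∀ F, F ∈ E₀ → F ∉ E₁ → ψ F ∈ E₁ ∧ ψ F ∉ E₀) : PR q E₀ ≤ PR q E₁ := by
  classical
  have hdecomp : ∀ (E E' : Set (κ → Bool)), PR q E = PR q (E ∩ E') + PR q (E \ E') := by
    intro E E'
    unfold PR
    rw [← Finset.sum_add_distrib]
    refine Finset.sum_congr rfl fun F _ => ?_
    by_cases h1 : F ∈ E <;> by_cases h2 : F ∈ E' <;>
      simp [Set.indicator_apply, h1, h2]
  rw [hdecomp E₀ E₁, hdecomp E₁ E₀, Set.inter_comm E₁ E₀]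
  refine add_le_add le_rfl ?_
  unfold PR
  rw [Finset.sum_indicator_eq_sum_filter, Finset.sum_indicator_eq_sum_filter]
  set s : Finset (κ → Bool) := Finset.univ.filter (fun F => F ∈ E₀ \ E₁)
  set t : Finset (κ → Bool) := Finset.univ.filter (fun F => F ∈ E₁ \ E₀)
  calc ∑ F ∈ s, wt q F = ∑ F ∈ s, wt q (ψ F) := by
        refine Finset.sum_congr rfl fun F _ => (hwt F).symm
    _ = ∑ G ∈ s.image ψ, wt q G := (Finset.sum_image fun a _ b _ h => hinj h).symm
    _ ≤ ∑ G ∈ t, wt q G := by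
        refine Finset.sum_le_sum_of_subset ?_
        intro G hG
        rw [Finset.mem_image] at hG
        obtain ⟨F, hF, rfl⟩ := hG
        rw [Finset.mem_filter] at hF
        obtain ⟨-, hF0, hF1⟩ := hF
        have := hmap F hF0 hF1
        simp only [t, Finset.mem_filter, Finset.mem_univ, true_and]
        exact ⟨this.1, this.2⟩

/-! ### Marginalization -/

def margEquiv (α β : Type*) [DecidableEq β] (b₀ : β) :
    ((β × α) → Bool) ≃ ((α → Bool) × ({y : β × α // y.1 ≠ b₀} → Bool)) where
  toFun F := (fun a => F (b₀, a), fun y => F y.1)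
  invFun z := fun y => if hy : y.1 = b₀ then z.1 y.2 else z.2 ⟨y, hy⟩
  left_inv F := by
    funext y
    show (if hy : y.1 = b₀ then F (b₀, y.2) else F y) = F y
    obtain ⟨y1, y2⟩ := y
    by_cases hy : y1 = b₀
    · subst hy
      rw [dif_pos rfl]
    · rw [dif_neg hy]
  right_inv z := by
    refine Prod.ext (funext fun a => ?_) (funext fun y => ?_)
    · show (if hy : ((b₀ : β), a).1 = b₀ then z.1 ((b₀ : β), a).2 else z.2 ⟨_, hy⟩) = z.1 a
      rw [dif_pos rfl]
    · show (if hy : (y : β × α).1 = b₀ then z.1 (y : β × α).2 else z.2 ⟨_, hy⟩) = z.2 y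
      rw [dif_neg y.2]

def sectEquiv (α β : Type*) (b₀ : β) : α ≃ {y : β × α // y.1 = b₀} where
  toFun a := ⟨(b₀, a), rfl⟩
  invFun y := (y : β × α).2
  left_inv a := rfl
  right_inv y := by
    obtain ⟨⟨y1, y2⟩, hy⟩ := y
    have : y1 = b₀ := hy
    subst this
    rfl

lemma marg {α β : Type*} [Fintype α] [Fintype β] [DecidableEq α] [DecidableEq β]
    {q : ℝ≥0∞} (hq : q ≤ 1) (b₀ : β) (A : Set (α → Bool)) :
    PR q {F : β × α → Bool | (fun a => F (b₀, a)) ∈ A} = PR q A := by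
  classical
  set E := {F : β × α → Bool | (fun a => F (b₀, a)) ∈ A}
  have key : PR q E = ∑ z : (α → Bool) × ({y : β × α // y.1 ≠ b₀} → Bool),
      E.indicator (wt q) ((margEquiv α β b₀).symm z) := by
    unfold PR
    exact (Equiv.sum_comp (margEquiv α β b₀).symm (E.indicator (wt q))).symm
  rw [key, Fintype.sum_prod_type]
  have hval : ∀ (g : α → Bool) (h : {y : β × α // y.1 ≠ b₀} → Bool),
      E.indicator (wt q) ((margEquiv α β b₀).symm (g, h)) =
        A.indicator (wt q) g * wt q h := by
    intro g h
    set F := (margEquiv α β b₀).symm (g, h) with hF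
    have hFval : ∀ y : β × α, F y = if hy : y.1 = b₀ then g y.2 else h ⟨y, hy⟩ :=
      fun y => rfl
    have hmem : F ∈ E ↔ g ∈ A := by
      have hg : (fun a => F (b₀, a)) = g := by
        funext a
        rw [hFval, dif_pos rfl]
      simp only [E, Set.mem_setOf_eq, hg]
    have hwtF : wt q F = wt q g * wt q h := by
      unfold wt
      rw [← Fintype.prod_subtype_mul_prod_subtype (fun y : β × α => y.1 = b₀)
        (fun y => w q (F y))]
      congr 1
      · rw [← Equiv.prod_comp (sectEquiv α β b₀) (fun y => w q (F y))]
        refine Finset.prod_congr rfl fun a _ => ?_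
        congr 1
        show F ((b₀ : β), a) = g a
        rw [hFval, dif_pos rfl]
      · refine Finset.prod_congr rfl fun y _ => ?_
        congr 1
        rw [hFval, dif_neg y.2]
    by_cases hg : g ∈ A
    · rw [Set.indicator_of_mem (hmem.mpr hg), Set.indicator_of_mem hg, hwtF]
    · rw [Set.indicator_of_notMem (fun hc => hg (hmem.mp hc)),
        Set.indicator_of_notMem hg, zero_mul]
  calc ∑ g : α → Bool, ∑ h : {y : β × α // y.1 ≠ b₀} → Bool,
        E.indicator (wt q) ((margEquiv α β b₀).symm (g, h))
      = ∑ g : α → Bool, A.indicator (wt q) g *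
          (∑ h : {y : β × α // y.1 ≠ b₀} → Bool, wt q h) := by
        refine Finset.sum_congr rfl fun g _ => ?_
        rw [Finset.mul_sum]
        exact Finset.sum_congr rfl fun h _ => hval g h
    _ = PR q A := by
        rw [wt_sum _ hq]
        unfold PR
        exact Finset.sum_congr rfl fun g _ => mul_one _

/-! ### Measures as weighted sums -/

instance bern_prob (p : ℝ) : IsProbabilityMeasure (bernoulliMeasure p) :=
  PMF.toMeasure.isProbabilityMeasure _

instance er_prob (n : ℕ) (p : ℝ) : IsProbabilityMeasure (erMeasure n p) := by
  unfold erMeasure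
  infer_instance

lemma measurableSet_of_fin {δ : Type*} [Countable δ] [MeasurableSpace δ]
    [MeasurableSingletonClass δ] (s : Set δ) : MeasurableSet s :=
  MeasurableSet.of_discrete

lemma meas_eq_sum {δ : Type*} [Fintype δ] [MeasurableSpace δ] [MeasurableSingletonClass δ]
    (μ : Measure δ) (S : Set δ) : μ S = ∑ x : δ, S.indicator (fun x => μ {x}) x := by
  rw [← Measure.tsum_indicator_apply_singleton μ S MeasurableSet.of_discrete, tsum_fintype]

lemma bern_singleton {p : ℝ} (hp1 : p ≤ 1) (b : Bool) :
    bernoulliMeasure p {b} = w (ENNReal.ofReal p) b := by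
  have hmin : min (Real.toNNReal p) 1 = Real.toNNReal p :=
    min_eq_left (Real.toNNReal_le_one.mpr hp1)
  unfold bernoulliMeasure
  rw [PMF.toMeasure_apply_singleton _ _ (measurableSet_singleton b)]
  rw [PMF.bernoulli_apply]
  cases b <;> simp [w, hmin, ENNReal.ofReal]

lemma pi_bern_singleton {κ : Type*} [Fintype κ] {p : ℝ} (hp1 : p ≤ 1) (F : κ → Bool) :
    Measure.pi (fun _ : κ => bernoulliMeasure p) {F} = wt (ENNReal.ofReal p) F := by
  have h1 : ({F} : Set (κ → Bool)) = Set.pi Set.univ (fun x => {F x}) := by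
    ext G
    simp [Set.mem_pi, funext_iff]
  rw [h1, Measure.pi_pi]
  exact Finset.prod_congr rfl fun x _ => bern_singleton hp1 (F x)

lemma erMeasure_eq_PR {n : ℕ} {p : ℝ} (hp1 : p ≤ 1) (S : Set (Sym2 (Fin n) → Bool)) :
    erMeasure n p S = PR (ENNReal.ofReal p) S := by
  show Measure.pi (fun _ => bernoulliMeasure p) S = _
  rw [meas_eq_sum]
  refine Finset.sum_congr rfl fun F _ => ?_
  by_cases hF : F ∈ S
  · rw [Set.indicator_of_mem hF, Set.indicator_of_mem hF, pi_bern_singleton hp1]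
  · rw [Set.indicator_of_notMem hF, Set.indicator_of_notMem hF]

lemma erTupleMeasure_eq_PR {n : ℕ} {p : ℝ} (hp1 : p ≤ 1)
    (T : Set (Fin n → Sym2 (Fin n) → Bool)) :
    erTupleMeasure (Fin n) n p T
      = PR (ENNReal.ofReal p)
          {F : Fin n × Sym2 (Fin n) → Bool | (fun i e => F (i, e)) ∈ T} := by
  classical
  show Measure.pi (fun _ => erMeasure n p) T = _
  rw [meas_eq_sum]
  have hsing : ∀ ω : Fin n → Sym2 (Fin n) → Bool,
      (Measure.pi fun _ : Fin n => erMeasure n p) {ω}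
        = ∏ i, wt (ENNReal.ofReal p) (ω i) := by
    intro ω
    have h1 : ({ω} : Set (Fin n → Sym2 (Fin n) → Bool))
        = Set.pi Set.univ (fun i => {ω i}) := by
      ext g
      simp [Set.mem_pi, funext_iff]
    rw [h1, Measure.pi_pi]
    refine Finset.prod_congr rfl fun i _ => ?_
    have := pi_bern_singleton (κ := Sym2 (Fin n)) hp1 (ω i)
    exact this
  set c : (Fin n × Sym2 (Fin n) → Bool) ≃ (Fin n → Sym2 (Fin n) → Bool) :=
    (Equiv.curry (Fin n) (Sym2 (Fin n)) Bool)
  rw [← Equiv.sum_comp c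
    (T.indicator fun x => (Measure.pi fun _ => erMeasure n p) {x})]
  unfold PR
  refine Finset.sum_congr rfl fun F _ => ?_
  have hmem : c F ∈ T ↔ F ∈ {F : Fin n × Sym2 (Fin n) → Bool | (fun i e => F (i, e)) ∈ T} :=
    Iff.rfl
  by_cases hF : c F ∈ T
  · rw [Set.indicator_of_mem hF, Set.indicator_of_mem (hmem.mp hF), hsing]
    unfold wt
    rw [Fintype.prod_prod_type (fun x : Fin n × Sym2 (Fin n) => w (ENNReal.ofReal p) (F x))]
    rfl
  · rw [Set.indicator_of_notMem hF, Set.indicator_of_notMem (fun h => hF (hmem.mpr h))]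

/-! ### Rotation arithmetic -/

lemma rot_ne {n : ℕ} (hn : 3 ≤ n) (i : Fin n) : finRotate n i ≠ i := by
  obtain ⟨m, rfl⟩ : ∃ m, n = m + 3 := ⟨n - 3, by omega⟩
  show finRotate (m + 2 + 1) i ≠ i
  rw [finRotate_succ_apply]
  intro h
  have h2 : i + 1 = i + 0 := by rw [h, add_zero]
  have h3 : (1 : Fin (m + 3)) = 0 := add_left_cancel h2
  have h4 := congrArg Fin.val h3
  rw [Fin.val_one, Fin.val_zero] at h4
  exact one_ne_zero h4

lemma rot_rot_ne {n : ℕ} (hn : 3 ≤ n) (i : Fin n) : finRotate n (finRotate n i) ≠ i := by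
  obtain ⟨m, rfl⟩ : ∃ m, n = m + 3 := ⟨n - 3, by omega⟩
  show finRotate (m + 2 + 1) (finRotate (m + 2 + 1) i) ≠ i
  rw [finRotate_succ_apply, finRotate_succ_apply]
  intro h
  have h2 : i + (1 + 1) = i + 0 := by rw [← add_assoc, h, add_zero]
  have h3 : (1 + 1 : Fin (m + 3)) = 0 := add_left_cancel h2
  have h4 := congrArg Fin.val h3
  rw [Fin.val_add, Fin.val_one, Fin.val_zero, Nat.mod_eq_of_lt (by omega)] at h4
  omega

/-! ### The colored-cycle events -/

def cyc (n : ℕ) (v : Fin n ≃ Fin n) (i : Fin n) : Sym2 (Fin n) :=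
  s(v i, v (finRotate n i))

lemma cyc_inj {n : ℕ} (hn : 3 ≤ n) (v : Fin n ≃ Fin n) : Function.Injective (cyc n v) := by
  intro i k h
  unfold cyc at h
  rw [Sym2.eq_iff] at h
  rcases h with ⟨h1, -⟩ | ⟨h1, h2⟩
  · exact v.injective h1
  · exfalso
    have e1 : i = finRotate n k := v.injective h1
    have e2 : finRotate n i = k := v.injective h2
    apply rot_rot_ne hn k
    rw [← e1, e2]

def coordF (n : ℕ) [NeZero n] (χ : Fin n → Fin n) (P : Finset (Fin n × Sym2 (Fin n)))
    (v : Fin n ≃ Fin n) (i : Fin n) : Fin n × Sym2 (Fin n) :=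
  if (χ i, cyc n v i) ∈ P then (χ i, cyc n v i) else ((0 : Fin n), cyc n v i)

def Ev (n : ℕ) [NeZero n] (χ : Fin n → Fin n) (P : Finset (Fin n × Sym2 (Fin n))) :
    Set ((Fin n × Sym2 (Fin n)) → Bool) :=
  {F | ∃ v : Fin n ≃ Fin n, ∀ i, F (coordF n χ P v i) = true}

section Step

variable {n : ℕ} [NeZero n]

lemma coordF_snd (χ : Fin n → Fin n) (P : Finset (Fin n × Sym2 (Fin n)))
    (v : Fin n ≃ Fin n) (i : Fin n) : (coordF n χ P v i).2 = cyc n v i := by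
  unfold coordF
  split <;> rfl

lemma coordF_congr (χ : Fin n → Fin n) {P P' : Finset (Fin n × Sym2 (Fin n))}
    (v : Fin n ≃ Fin n) (i : Fin n)
    (h : ((χ i, cyc n v i) ∈ P) ↔ ((χ i, cyc n v i) ∈ P')) :
    coordF n χ P v i = coordF n χ P' v i := by
  unfold coordF
  by_cases hm : (χ i, cyc n v i) ∈ P
  · rw [if_pos hm, if_pos (h.mp hm)]
  · rw [if_neg hm, if_neg (fun hc => hm (h.mpr hc))]

lemma step (hn : 3 ≤ n) (χ : Fin n → Fin n) (q : ℝ≥0∞)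
    {P : Finset (Fin n × Sym2 (Fin n))} {x : Fin n × Sym2 (Fin n)} (hx : x ∉ P) :
    PR q (Ev n χ P) ≤ PR q (Ev n χ (insert x P)) := by
  classical
  obtain ⟨c', e₀⟩ := x
  by_cases hc : c' = (0 : Fin n)
  · -- the two events coincide
    have hco : ∀ (v : Fin n ≃ Fin n) (i : Fin n),
        coordF n χ P v i = coordF n χ (insert (c', e₀) P) v i := by
      intro v i
      by_cases h2 : (χ i, cyc n v i) = (c', e₀)
      · have hnot : (χ i, cyc n v i) ∉ P := by rw [h2]; exact hx
        have hin : (χ i, cyc n v i) ∈ insert (c', e₀) P := by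
          rw [h2]; exact Finset.mem_insert_self _ _
        unfold coordF
        rw [if_neg hnot, if_pos hin]
        have h21 : χ i = c' := (Prod.ext_iff.mp h2).1
        rw [h21, hc]
      · exact coordF_congr χ v i (by simp [Finset.mem_insert, h2])
    have hEq : Ev n χ P = Ev n χ (insert (c', e₀) P) := by
      unfold Ev
      ext F
      constructor
      · rintro ⟨v, hv⟩
        exact ⟨v, fun i => by rw [← hco v i]; exact hv i⟩
      · rintro ⟨v, hv⟩
        exact ⟨v, fun i => by rw [hco v i]; exact hv i⟩
    rw [hEq]
  · set P' := insert (c', e₀) P with hP'def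
    set j : Fin n × Sym2 (Fin n) := ((0 : Fin n), e₀) with hjdef
    set j' : Fin n × Sym2 (Fin n) := (c', e₀) with hj'def
    have hjj' : j ≠ j' := by
      intro h
      exact hc ((Prod.ext_iff.mp h).1).symm
    have hcoord_eq : ∀ (v : Fin n ≃ Fin n) (i : Fin n), (χ i, cyc n v i) ≠ j' →
        coordF n χ P v i = coordF n χ P' v i := by
      intro v i hne
      refine coordF_congr χ v i ?_
      simp only [P', Finset.mem_insert]
      constructor
      · exact fun h => Or.inr h
      · rintro (h | h)
        · exact absurd h hne
        · exact h
    have hcoord_j' : ∀ (v : Fin n ≃ Fin n) (i : Fin n), (χ i, cyc n v i) = j' →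
        coordF n χ P v i = j ∧ coordF n χ P' v i = j' := by
      intro v i he
      have h2 : cyc n v i = e₀ := (Prod.ext_iff.mp he).2
      constructor
      · unfold coordF
        rw [if_neg (by rw [he]; exact hx), h2]
      · unfold coordF
        rw [if_pos (by rw [he]; exact Finset.mem_insert_self _ _), he]
    refine PR_le_of_inj _ _ (fun F => F ∘ (Equiv.swap j j')) ?_ ?_ ?_
    · intro F G h
      funext y
      have h2 := congrFun h ((Equiv.swap j j').symm y)
      simpa using h2
    · intro F
      exact wt_comp_equiv q (Equiv.swap j j') F
    · intro F hF0 hF1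
      obtain ⟨v, hv⟩ := hF0
      have hspec : ∃ i₀, (χ i₀, cyc n v i₀) = j' := by
        by_contra hno
        push_neg at hno
        exact hF1 ⟨v, fun i => by rw [← hcoord_eq v i (hno i)]; exact hv i⟩
      obtain ⟨i₀, hi₀⟩ := hspec
      have he₀ : cyc n v i₀ = e₀ := (Prod.ext_iff.mp hi₀).2
      have hFj : F j = true := by
        have h2 := hv i₀
        rwa [(hcoord_j' v i₀ hi₀).1] at h2
      have hFj' : F j' = false := by
        cases hFt : F j'
        · rfl
        · exfalso
          refine hF1 ⟨v, fun i => ?_⟩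
          by_cases hsp : (χ i, cyc n v i) = j'
          · rw [(hcoord_j' v i hsp).2]; exact hFt
          · rw [← hcoord_eq v i hsp]; exact hv i
      have hed : ∀ i, i ≠ i₀ → cyc n v i ≠ e₀ := by
        intro i hne hceq
        exact hne (cyc_inj hn v (by rw [hceq, he₀]))
      constructor
      · refine ⟨v, fun i => ?_⟩
        show F (Equiv.swap j j' (coordF n χ P' v i)) = true
        by_cases hii : i = i₀
        · subst hii
          rw [(hcoord_j' v i hi₀).2, Equiv.swap_apply_right]
          exact hFj
        · have hce : cyc n v i ≠ e₀ := hed i hii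
          have hsp : (χ i, cyc n v i) ≠ j' := fun h => hce (Prod.ext_iff.mp h).2
          rw [← hcoord_eq v i hsp]
          have hsnd : (coordF n χ P v i).2 = cyc n v i := coordF_snd χ P v i
          have hne1 : coordF n χ P v i ≠ j := by
            intro h
            apply hce
            rw [← hsnd, h]
          have hne2 : coordF n χ P v i ≠ j' := by
            intro h
            apply hce
            rw [← hsnd, h]
          rw [Equiv.swap_apply_of_ne_of_ne hne1 hne2]
          exact hv i
      · rintro ⟨u, hu⟩
        have hnoj' : ∀ i, coordF n χ P u i ≠ j' := by
          intro i h
          unfold coordF at h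
          by_cases hm : (χ i, cyc n u i) ∈ P
          · rw [if_pos hm] at h
            rw [h] at hm
            exact hx hm
          · rw [if_neg hm] at h
            exact hc ((Prod.ext_iff.mp h).1).symm
        have hnoj : ∀ i, coordF n χ P u i ≠ j := by
          intro i h
          have h2 := hu i
          show False
          rw [show (F ∘ (Equiv.swap j j')) (coordF n χ P u i)
              = F (Equiv.swap j j' (coordF n χ P u i)) from rfl, h,
            Equiv.swap_apply_left, hFj'] at h2
          exact Bool.false_ne_true h2
        have hFcoord : ∀ i, F (coordF n χ P u i) = true := by
          intro i
          have h2 := hu i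
          rwa [show (F ∘ (Equiv.swap j j')) (coordF n χ P u i)
              = F (Equiv.swap j j' (coordF n χ P u i)) from rfl,
            Equiv.swap_apply_of_ne_of_ne (hnoj i) (hnoj' i)] at h2
        refine hF1 ⟨u, fun i => ?_⟩
        by_cases hsp : (χ i, cyc n u i) = j'
        · exact absurd (hcoord_j' u i hsp).1 (hnoj i)
        · rw [← hcoord_eq u i hsp]
          exact hFcoord i

lemma chain_le (hn : 3 ≤ n) (χ : Fin n → Fin n) (q : ℝ≥0∞)
    (P : Finset (Fin n × Sym2 (Fin n))) :
    PR q (Ev n χ ∅) ≤ PR q (Ev n χ P) := by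
  classical
  induction P using Finset.induction_on with
  | empty => exact le_rfl
  | insert _ _ hx ih => exact le_trans ih (step hn χ q hx)

end Step

/-! ### Extracting a cyclic ordering from a Hamiltonian cycle -/

lemma extract {n : ℕ} {G : SimpleGraph (Fin n)} (h : HasHamCycle n G) :
    3 ≤ n ∧ ∃ v : Fin n ≃ Fin n, ∀ i, G.Adj (v i) (v (finRotate n i)) := by
  classical
  obtain ⟨a, pw, hp⟩ := h
  have hlen : pw.length = n := by rw [hp.length_eq, Fintype.card_fin]
  have hn : 3 ≤ n := hlen ▸ hp.isCycle.three_le_length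
  set L := pw.support.tail with hLdef
  have hsup : pw.support = a :: L := pw.support_eq_cons
  have hLlen : L.length = n := by
    have h1 : pw.support.length = pw.length + 1 := SimpleGraph.Walk.length_support pw
    rw [hLdef, List.length_tail, h1, hlen]
    omega
  have hLne : L ≠ [] := by
    intro hcon
    rw [hcon] at hLlen
    simp at hLlen
    omega
  have hnodup : L.Nodup := hp.isCycle.support_nodup
  have hchain : List.IsChain G.Adj (a :: L) := by
    have h1 := pw.isChain_adj_support
    rw [hsup] at h1
    exact h1
  have hc2 := List.isChain_iff_getElem.mp hchain
  have h0 : ∀ h : 0 < L.length, G.Adj a (L.get ⟨0, h⟩) := fun h => hc2 0 (by simp; omega)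
  have hsucc : ∀ (i : ℕ) (h : i < L.length - 1),
      G.Adj (L.get ⟨i, by omega⟩) (L.get ⟨i + 1, by omega⟩) := fun i h => hc2 (i + 1) (by simp; omega)
  -- the last entry of L is a
  have hsome : L.getLast? = some a := by
    have h6 : pw.support.getLast? = some a := by
      rw [List.getLast?_eq_getLast (l := pw.support) (by simp)]
      exact congrArg some pw.getLast_support
    rw [hsup] at h6
    obtain ⟨b, L', hbL⟩ := List.exists_cons_of_ne_nil hLne
    rw [hbL] at h6 ⊢
    rwa [List.getLast?_cons_cons] at h6
  have hlast : L.getLast hLne = a := by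
    have h7 := List.getLast?_eq_getLast hLne
    rw [h7] at hsome
    exact Option.some.inj hsome
  have hlastget : ∀ (hx : n - 1 < L.length), L.get ⟨n - 1, hx⟩ = a := by
    intro hx
    have h8 : (⟨n - 1, hx⟩ : Fin L.length) = ⟨L.length - 1, by omega⟩ := by
      apply Fin.ext
      simp [hLlen]
    rw [h8, List.get_length_sub_one]
    exact hlast
  -- the bijection
  set vf : Fin n → Fin n := fun i => L.get (Fin.cast hLlen.symm i) with hvf
  have hinj : Function.Injective vf := by
    intro i k hik
    have h9 := List.nodup_iff_injective_get.mp hnodup hik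
    exact Fin.cast_injective _ h9
  have hbij : Function.Bijective vf := Finite.injective_iff_bijective.mp hinj
  refine ⟨hn, Equiv.ofBijective vf hbij, fun i => ?_⟩
  show G.Adj (vf i) (vf (finRotate n i))
  obtain ⟨m, rfl⟩ : ∃ m, n = m + 3 := ⟨n - 3, by omega⟩
  have hrot : finRotate (m + 3) i = i + 1 := finRotate_succ_apply i
  by_cases hi : (i : ℕ) < m + 2
  · have hval : ((i + 1 : Fin (m + 3)) : ℕ) = (i : ℕ) + 1 := by
      rw [Fin.val_add, Fin.val_one, Nat.mod_eq_of_lt (by omega)]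
    have h10 := hsucc (i : ℕ) (by rw [hLlen]; omega)
    have hidx1 : Fin.cast hLlen.symm i = (⟨(i : ℕ), by omega⟩ : Fin L.length) := rfl
    have hidx2 : Fin.cast hLlen.symm (finRotate (m + 3) i)
        = (⟨(i : ℕ) + 1, by rw [hLlen]; omega⟩ : Fin L.length) := by
      apply Fin.ext
      simp [hrot, hval]
    rw [hvf]
    simp only []
    rw [hidx1, hidx2]
    convert h10 using 2
  · have hival : (i : ℕ) = m + 2 := by omega
    have hval0 : ((i + 1 : Fin (m + 3)) : ℕ) = 0 := by
      rw [Fin.val_add, Fin.val_one, hival]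
      simp
    have hidx2 : Fin.cast hLlen.symm (finRotate (m + 3) i)
        = (⟨0, by rw [hLlen]; omega⟩ : Fin L.length) := by
      apply Fin.ext
      simp [hrot, hval0]
    have hidx1 : Fin.cast hLlen.symm i = (⟨m + 2, by rw [hLlen]; omega⟩ : Fin L.length) := by
      apply Fin.ext
      simp [hival]
    rw [hvf]
    simp only []
    rw [hidx1, hidx2]
    have h11 : L.get ⟨m + 2, by rw [hLlen]; omega⟩ = a := by
      have := hlastget (by rw [hLlen]; omega)
      convert this using 2
      exact Fin.ext (by simp)
    rw [h11]
    exact h0 (by rw [hLlen]; omega)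

end HamCoupling

theorem statement_10 (n : ℕ) (p : ℝ) (hp0 : 0 ≤ p) (hp1 : p ≤ 1) (χ : Fin n → Fin n) :
    erMeasure n p {f | HasHamCycle n (graphOf f)} ≤
      erTupleMeasure (Fin n) n p {ω | HasChiHamCycle n (fun i => graphOf (ω i)) χ} := by
  classical
  by_cases hn : 3 ≤ n
  · haveI : NeZero n := ⟨by omega⟩
    set q := ENNReal.ofReal p with hqdef
    have hq1 : q ≤ 1 := ENNReal.ofReal_le_one.mpr hp1
    set A : Set (Sym2 (Fin n) → Bool) :=
      {f | ∃ v : Fin n ≃ Fin n, ∀ i, f (HamCoupling.cyc n v i) = true} with hA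
    have hsub1 : {f : Sym2 (Fin n) → Bool | HasHamCycle n (graphOf f)} ⊆ A := by
      intro f hf
      obtain ⟨-, v, hv⟩ := HamCoupling.extract hf
      refine ⟨v, fun i => ?_⟩
      have := ((SimpleGraph.fromEdgeSet_adj _).mp (hv i)).1
      exact this
    set T : Set (Fin n → Sym2 (Fin n) → Bool) :=
      {ω | ∃ v : Fin n ≃ Fin n, ∀ i, ω (χ i) (HamCoupling.cyc n v i) = true} with hT
    have hsub2 : T ⊆ {ω | HasChiHamCycle n (fun i => graphOf (ω i)) χ} := by
      rintro ω ⟨v, hv⟩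
      refine ⟨hn, v, fun i => ?_⟩
      refine (SimpleGraph.fromEdgeSet_adj _).mpr ⟨hv i, ?_⟩
      intro hcon
      exact HamCoupling.rot_ne hn i (v.injective hcon.symm)
    have hEv0 : HamCoupling.Ev n χ ∅
        = {F : Fin n × Sym2 (Fin n) → Bool | (fun e => F ((0 : Fin n), e)) ∈ A} := by
      unfold HamCoupling.Ev
      ext F
      simp only [Set.mem_setOf_eq, hA]
      constructor
      · rintro ⟨v, hv⟩
        refine ⟨v, fun i => ?_⟩
        have h2 := hv i
        rwa [show HamCoupling.coordF n χ ∅ v i = ((0 : Fin n), HamCoupling.cyc n v i) from by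
          unfold HamCoupling.coordF; rw [if_neg (Finset.notMem_empty _)]] at h2
      · rintro ⟨v, hv⟩
        refine ⟨v, fun i => ?_⟩
        rw [show HamCoupling.coordF n χ ∅ v i = ((0 : Fin n), HamCoupling.cyc n v i) from by
          unfold HamCoupling.coordF; rw [if_neg (Finset.notMem_empty _)]]
        exact hv i
    have hEvU : HamCoupling.Ev n χ Finset.univ
        = {F : Fin n × Sym2 (Fin n) → Bool | (fun i e => F (i, e)) ∈ T} := by
      unfold HamCoupling.Ev
      ext F
      simp only [Set.mem_setOf_eq, hT]
      constructor
      · rintro ⟨v, hv⟩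
        refine ⟨v, fun i => ?_⟩
        have h2 := hv i
        rwa [show HamCoupling.coordF n χ Finset.univ v i = (χ i, HamCoupling.cyc n v i) from by
          unfold HamCoupling.coordF; rw [if_pos (Finset.mem_univ _)]] at h2
      · rintro ⟨v, hv⟩
        refine ⟨v, fun i => ?_⟩
        rw [show HamCoupling.coordF n χ Finset.univ v i = (χ i, HamCoupling.cyc n v i) from by
          unfold HamCoupling.coordF; rw [if_pos (Finset.mem_univ _)]]
        exact hv i
    calc erMeasure n p {f | HasHamCycle n (graphOf f)}
        ≤ erMeasure n p A := measure_mono hsub1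
      _ = HamCoupling.PR q A := HamCoupling.erMeasure_eq_PR hp1 A
      _ = HamCoupling.PR q (HamCoupling.Ev n χ ∅) := by
          rw [hEv0, HamCoupling.marg hq1 (0 : Fin n) A]
      _ ≤ HamCoupling.PR q (HamCoupling.Ev n χ Finset.univ) :=
          HamCoupling.chain_le hn χ q Finset.univ
      _ = erTupleMeasure (Fin n) n p T := by
          rw [hEvU, HamCoupling.erTupleMeasure_eq_PR hp1 T]
      _ ≤ erTupleMeasure (Fin n) n p {ω | HasChiHamCycle n (fun i => graphOf (ω i)) χ} :=
          measure_mono hsub2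
  · have hempty : {f : Sym2 (Fin n) → Bool | HasHamCycle n (graphOf f)} = ∅ := by
      ext f
      simp only [Set.mem_setOf_eq, Set.mem_empty_iff_false, iff_false]
      intro h
      exact hn (HamCoupling.extract h).1
    rw [hempty]
    simp only [measure_empty]
    exact zero_le
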